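/- In a pro-nilpotent pre-Lie algebra g concentrated in degree 0, the map β ↦ e_β = Σ_{r≥1} β^{•r}/r! (left-iterated pre-Lie powers) is a bijection from g to itself. -/

import Mathlib

/-- `rIter b x k a` is the `k`-fold right pre-Lie multiplication of `a` by `x`. -/
def rIter {G : Type*} (b : G → G → G) (x : G) : ℕ → G → G
  | 0, a => a
  | k + 1, a => b (rIter b x k a) x

/-- `eExp b N β = Σ_{r=1}^{N} β^{•r}/r!` (left-iterated pre-Lie powers), the pre-Lie
exponential, truncated at `N` (exact by nilpotence). -/
def eExp {G : Type*} [AddCommGroup G] [Module ℚ G] (b : G → G → G) (N : ℕ) (β : G) : G :=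
  ∑ j ∈ Finset.range N, ((Nat.factorial (j + 1) : ℚ))⁻¹ • rIter b β j β

/-- In a pro-nilpotent pre-Lie algebra `g` (complete filtered, `g = F¹g`, modelled here by
a filtration `F` with `F 1 = ⊤`, `F i • F j ⊆ F (i+j)` and `F N = ⊥`), the pre-Lie
exponential `β ↦ e_β = Σ_{r≥1} β^{•r}/r!` is a bijection from `g` to itself. -/
theorem preLie_exponential_bijective {G : Type*} [AddCommGroup G] [Module ℚ G]
    (b : G →ₗ[ℚ] G →ₗ[ℚ] G)
    (hpl : ∀ x y z : G, b x (b y z) - b (b x y) z = b x (b z y) - b (b x z) y)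
    (F : ℕ → Submodule ℚ G) (N : ℕ) (hN : 0 < N)
    (hF1 : F 1 = ⊤)
    (hFb : ∀ (i j : ℕ) (x y : G), x ∈ F i → y ∈ F j → b x y ∈ F (i + j))
    (hFN : F N = ⊥) :
    Function.Bijective (fun β : G => eExp (fun p q => b p q) N β) := by
  classical
  set b' : G → G → G := fun p q => b p q with hb'
  -- A monotone multiplicative filtration refined from `F`.
  set C : ℕ → Submodule ℚ G := fun k => (Finset.Icc 1 (min k N)).inf F with hC
  have memC : ∀ (k : ℕ) (x : G), x ∈ C k ↔ ∀ m ∈ Finset.Icc 1 (min k N), x ∈ F m := by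
    intro k x; simp [hC, Submodule.mem_finsetInf]
  have htop : ∀ x : G, x ∈ C 1 := by
    intro x
    rw [memC]
    intro m hm
    simp only [Finset.mem_Icc] at hm
    have hm1 : m = 1 := by omega
    subst hm1; rw [hF1]; trivial
  have hmono : ∀ {k l : ℕ}, k ≤ l → C l ≤ C k := by
    intro k l h
    apply Finset.inf_mono
    intro m hm
    simp only [Finset.mem_Icc] at hm ⊢
    omega
  have hbot : ∀ x : G, x ∈ C N → x = 0 := by
    intro x hx
    have h1 : C N ≤ F N := Finset.inf_le (by simp only [Finset.mem_Icc]; omega)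
    have := h1 hx
    rw [hFN] at this
    simpa using this
  have hmul : ∀ (i j : ℕ) (x y : G), 1 ≤ i → 1 ≤ j → x ∈ C i → y ∈ C j →
      b x y ∈ C (i + j) := by
    intro i j x y hi hj hx hy
    rw [memC] at hx hy ⊢
    intro m hm
    simp only [Finset.mem_Icc] at hm hx hy
    rcases Nat.eq_or_lt_of_le hm.1 with h1 | h2
    · rw [← h1, hF1]; trivial
    · -- 2 ≤ m
      set p := min i (m - 1) with hp
      set q := m - p with hq
      have hxp : x ∈ F p := hx p (by omega)
      have hyq : y ∈ F q := hy q (by omega)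
      have hpq : p + q = m := by omega
      have := hFb p q x y hxp hyq
      rwa [hpq] at this
  -- iterated products land deep in the filtration
  have hrIter : ∀ (j i : ℕ) (x a : G), 1 ≤ i → a ∈ C i → rIter b' x j a ∈ C (i + j) := by
    intro j
    induction j with
    | zero => intro i x a hi ha; simpa [rIter] using ha
    | succ j ih =>
      intro i x a hi ha
      have h1 := ih i x a hi ha
      have h2 := hmul (i + j) 1 _ x (by omega) le_rfl h1 (htop x)
      simpa [rIter, hb', ← add_assoc] using h2
  -- contraction for iterated products
  have hdiff : ∀ (j k : ℕ) (x y : G), 1 ≤ k → x - y ∈ C k →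
      rIter b' x j x - rIter b' y j y ∈ C (k + j) := by
    intro j
    induction j with
    | zero => intro k x y hk h; simpa [rIter] using h
    | succ j ih =>
      intro k x y hk h
      have h1 := ih k x y hk h
      have hAy : rIter b' y j y ∈ C (1 + j) := hrIter j 1 y y le_rfl (htop y)
      have e : rIter b' x (j + 1) x - rIter b' y (j + 1) y
          = b (rIter b' x j x - rIter b' y j y) x + b (rIter b' y j y) (x - y) := by
        simp only [rIter, hb', map_sub, LinearMap.sub_apply]
        abel
      rw [e]
      have m1 : b (rIter b' x j x - rIter b' y j y) x ∈ C (k + (j + 1)) :=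
        hmul (k + j) 1 _ x (by omega) le_rfl h1 (htop x)
      have m2 : b (rIter b' y j y) (x - y) ∈ C ((1 + j) + k) :=
        hmul (1 + j) k _ (x - y) (by omega) hk hAy h
      have hkj : (1 + j) + k = k + (j + 1) := by omega
      rw [hkj] at m2
      exact Submodule.add_mem _ m1 m2
  -- contraction for the exponential
  have hexp : ∀ (k : ℕ) (x y : G), 1 ≤ k → x - y ∈ C k →
      eExp b' N x - eExp b' N y - (x - y) ∈ C (k + 1) := by
    intro k x y hk h
    obtain ⟨M, hM⟩ : ∃ M, N = M + 1 := ⟨N - 1, by omega⟩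
    have e : eExp b' N x - eExp b' N y
        = (∑ j ∈ Finset.range M, ((Nat.factorial (j + 1 + 1) : ℚ))⁻¹ •
            (rIter b' x (j + 1) x - rIter b' y (j + 1) y)) + (x - y) := by
      rw [hM]
      unfold eExp
      rw [← Finset.sum_sub_distrib]
      simp only [← smul_sub]
      rw [Finset.sum_range_succ']
      simp [rIter, Nat.factorial]
    rw [e, add_sub_cancel_right]
    refine Submodule.sum_mem _ ?_
    intro j hj
    refine Submodule.smul_mem _ _ ?_
    exact hmono (by omega) (hdiff (j + 1) k x y hk h)
  constructor
  · -- injectivity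
    intro x y hxy
    have hxy' : eExp b' N x = eExp b' N y := hxy
    have key : ∀ k, x - y ∈ C (k + 1) := by
      intro k
      induction k with
      | zero => exact htop _
      | succ k ih =>
        have h2 := hexp (k + 1) x y (by omega) ih
        rw [hxy'] at h2
        have h3 : -(x - y) ∈ C (k + 1 + 1) := by simpa using h2
        simpa using Submodule.neg_mem _ h3
    have h4 : x - y ∈ C N := hmono (by omega) (key N)
    have h5 := hbot _ h4
    exact sub_eq_zero.mp h5
  · -- surjectivity
    intro γ
    set s : ℕ → G := fun n => Nat.rec γ (fun _ prev => γ - (eExp b' N prev - prev)) n with hs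
    have hs0 : s 0 = γ := rfl
    have hsS : ∀ n, s (n + 1) = γ - (eExp b' N (s n) - s n) := fun n => rfl
    have hz : eExp b' N (0 : G) = 0 := by
      unfold eExp
      apply Finset.sum_eq_zero
      intro j hj
      have : rIter b' (0 : G) j (0 : G) = 0 := by
        induction j with
        | zero => simp [rIter]
        | succ j ih => simp [rIter, hb', ih]
      simp [this]
    have hstep : ∀ n, s (n + 1) - s n ∈ C (n + 2) := by
      intro n
      induction n with
      | zero =>
        have h0 : eExp b' N γ - eExp b' N 0 - (γ - 0) ∈ C 2 :=
          hexp 1 γ 0 le_rfl (by simpa using htop γ)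
        have e : s 1 - s 0 = -(eExp b' N γ - eExp b' N 0 - (γ - 0)) := by
          have e1 : s 1 = γ - (eExp b' N γ - γ) := rfl
          rw [e1, hs0, hz]
          abel
        show s 1 - s 0 ∈ C 2
        rw [e]
        exact Submodule.neg_mem _ h0
      | succ n ih =>
        have h2 := hexp (n + 2) (s (n + 1)) (s n) (by omega) ih
        have e : s (n + 2) - s (n + 1)
            = -(eExp b' N (s (n + 1)) - eExp b' N (s n) - (s (n + 1) - s n)) := by
          rw [hsS (n + 1), hsS n]
          abel
        rw [e]
        exact Submodule.neg_mem _ h2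
    have hfix : s (N + 1) - s N = 0 :=
      hbot _ (hmono (by omega) (hstep N))
    refine ⟨s N, ?_⟩
    have h6 : eExp b' N (s N) - γ = -(s (N + 1) - s N) := by
      rw [hsS N]
      abel
    rw [hfix, neg_zero] at h6
    exact sub_eq_zero.mp h6
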